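/- Let L/F be a finite totally and tamely ramified Galois extension of local fields with cyclic Galois group generated by σ, and let m ≥ 1. If y lies in the m-th power of the maximal ideal of O_L and Tr_{L/F}(y) = 0, then there exists x in the m-th power of the maximal ideal of O_L with x - σ(x) = y. -/

import Mathlib

/-- Additive Hilbert 90 for powers of the maximal ideal: let `L/F` be a finite totally and
tamely ramified Galois extension of local fields with cyclic Galois group generated by `σ`,
`A ⊆ L` the (σ-stable) valuation ring of `L`, a discrete valuation ring in which the
degree `e = [L:F]` is a unit (tameness).  If `y` lies in the `m`-th power of the maximal
ideal of `A` and `Tr_{L/F}(y) = 0`, then there is `x` in the `m`-th power of the maximal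
ideal with `x - σ(x) = y`. -/
theorem additive_hilbert90_maximal_ideal {F L : Type*} [Field F] [Field L] [Algebra F L]
    [FiniteDimensional F L] [IsGalois F L] (σ : L ≃ₐ[F] L)
    (hgen : ∀ τ : L ≃ₐ[F] L, τ ∈ Subgroup.zpowers σ)
    (A : Subring L) [IsDomain A] [IsDiscreteValuationRing A]
    (hval : ∀ x : L, x ∈ A ∨ x⁻¹ ∈ A)
    (hσA : ∀ a : L, a ∈ A → σ a ∈ A)
    (htame : IsUnit ((Module.finrank F L : A)))
    (m : ℕ) (hm : 1 ≤ m) (y : A)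
    (hy : y ∈ (IsLocalRing.maximalIdeal A) ^ m)
    (htr : Algebra.trace F L (y : L) = 0) :
    ∃ x : A, x ∈ (IsLocalRing.maximalIdeal A) ^ m ∧ (x : L) - σ (x : L) = (y : L) := by
  classical
  set N := orderOf σ with hN
  have hNcard : N = Fintype.card (L ≃ₐ[F] L) := by
    rw [hN, orderOf_eq_card_of_forall_mem_zpowers hgen, Nat.card_eq_fintype_card]
  have hNrank : N = Module.finrank F L := by
    rw [hNcard, ← Nat.card_eq_fintype_card, IsGalois.card_aut_eq_finrank]
  have hNpos : 0 < N := orderOf_pos σ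
  have hσN : σ ^ N = 1 := pow_orderOf_eq_one σ
  -- σ-powers preserve A
  have hσpow : ∀ (k : ℕ) (a : L), a ∈ A → (σ ^ k) a ∈ A := by
    intro k
    induction k with
    | zero => intro a ha; simpa using ha
    | succ k ih =>
      intro a ha
      rw [pow_succ]
      exact ih _ (hσA a ha)
  have hσsymmA : ∀ a : L, a ∈ A → σ.symm a ∈ A := by
    intro a ha
    have hss : σ.symm a = (σ ^ (N - 1)) a := by
      have h2 : σ ^ (N - 1) = σ⁻¹ := by
        rw [eq_inv_iff_mul_eq_one, ← pow_succ, Nat.sub_add_cancel hNpos, hσN]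
      rw [h2]; rfl
    rw [hss]
    exact hσpow _ a ha
  -- restricted ring homs
  let φ : A →+* A :=
  { toFun := fun a => ⟨σ a, hσA a a.2⟩
    map_one' := by ext; simp
    map_mul' := by intro a b; ext; simp
    map_zero' := by ext; simp
    map_add' := by intro a b; ext; simp }
  let ψ : A →+* A :=
  { toFun := fun a => ⟨σ.symm a, hσsymmA a a.2⟩
    map_one' := by ext; simp
    map_mul' := by intro a b; ext; simp
    map_zero' := by ext; simp
    map_add' := by intro a b; ext; simp }
  have hψφ : ∀ a : A, ψ (φ a) = a := by
    intro a; ext; simp [φ, ψ]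
  -- φ preserves maximal ideal
  have hφmax : ∀ a : A, a ∈ IsLocalRing.maximalIdeal A → φ a ∈ IsLocalRing.maximalIdeal A := by
    intro a ha
    rw [IsLocalRing.mem_maximalIdeal] at ha ⊢
    intro hu
    exact ha (by simpa [hψφ] using hu.map ψ)
  have hφpow : ∀ a : A, a ∈ (IsLocalRing.maximalIdeal A) ^ m →
      φ a ∈ (IsLocalRing.maximalIdeal A) ^ m := by
    intro a ha
    have h1 : Ideal.map φ ((IsLocalRing.maximalIdeal A) ^ m) ≤ (IsLocalRing.maximalIdeal A) ^ m := by
      rw [Ideal.map_pow]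
      refine Ideal.pow_right_mono ?_ m
      rw [Ideal.map_le_iff_le_comap]
      intro b hb
      exact hφmax b hb
    exact h1 (Ideal.mem_map_of_mem φ ha)
  -- the elements σ^i y in A
  let g : ℕ → A := fun i => ⟨(σ ^ i) (y : L), hσpow i _ y.2⟩
  have hg0 : g 0 = y := by ext; simp [g]
  have hgsucc : ∀ i, g (i + 1) = φ (g i) := by
    intro i; ext; simp [g, φ, pow_succ']
  have hgmem : ∀ i, g i ∈ (IsLocalRing.maximalIdeal A) ^ m := by
    intro i
    induction i with
    | zero => rw [hg0]; exact hy
    | succ i ih => rw [hgsucc]; exact hφpow _ ih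
  -- inverse of N in A
  obtain ⟨v, hv⟩ : ∃ v : A, v * (N : A) = 1 := by
    obtain ⟨v, hv⟩ := htame.exists_left_inv
    exact ⟨v, by rw [← hNrank] at hv; exact hv⟩
  -- the element x
  refine ⟨v * ∑ i ∈ Finset.range N, ((N - i : ℕ) : A) * g i, ?_, ?_⟩
  · exact Ideal.mul_mem_left _ _ (Ideal.sum_mem _ fun i _ => Ideal.mul_mem_left _ _ (hgmem i))
  · -- computation in L
    set D : ℕ → L := fun i => (σ ^ i) (y : L) with hD
    have hcoe : ((v * ∑ i ∈ Finset.range N, ((N - i : ℕ) : A) * g i : A) : L)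
        = (v : L) * ∑ i ∈ Finset.range N, ((N - i : ℕ) : L) * D i := by
      push_cast
      rfl
    have hvL : (v : L) * (N : L) = 1 := by
      have := congrArg (Subring.subtype A) hv
      push_cast at this
      simpa using this
    have hσv : σ (v : L) = (v : L) := by
      have hNne : (N : L) ≠ 0 := by
        intro h
        rw [h, mul_zero] at hvL
        exact zero_ne_one hvL
      have hveq : (v : L) = (N : L)⁻¹ := eq_inv_of_mul_eq_one_left hvL
      rw [hveq, map_inv₀, map_natCast]
    have hσD : ∀ i, σ (D i) = D (i + 1) := by
      intro i
      simp [hD, pow_succ']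
      exact (Function.iterate_succ_apply' _ _ _).symm.trans (Function.iterate_succ_apply _ _ _)
    -- trace: sum over range N of D i = 0
    have hbij : Function.Bijective (fun i : Fin N => σ ^ (i : ℕ)) := by
      rw [Fintype.bijective_iff_injective_and_card]
      constructor
      · intro i j hij
        exact Fin.ext (pow_injOn_Iio_orderOf i.2 j.2 hij)
      · simp [hNcard]
    have hsum0 : ∑ i ∈ Finset.range N, D i = 0 := by
      have h1 : ∑ i ∈ Finset.range N, D i = ∑ τ : L ≃ₐ[F] L, τ (y : L) := by
        rw [← Fin.sum_univ_eq_sum_range]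
        exact (Fintype.sum_bijective _ hbij _ _ fun i => rfl)
      rw [h1, ← trace_eq_sum_automorphisms, htr, map_zero]
    have hDN : D N = D 0 := by
      show (σ ^ N) (y : L) = (σ ^ 0) (y : L)
      rw [hσN, pow_zero]
    -- main telescoping
    have hkey : (∑ i ∈ Finset.range N, ((N - i : ℕ) : L) * D i)
        - (∑ i ∈ Finset.range N, ((N - i : ℕ) : L) * D (i + 1)) = (N : L) * D 0 := by
      have hc : ∀ i ∈ Finset.range N, ((N - i : ℕ) : L) * D (i + 1)
          = ((N - (i + 1) : ℕ) : L) * D (i + 1) + D (i + 1) := by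
        intro i hi
        rw [Finset.mem_range] at hi
        have : (N - i : ℕ) = (N - (i + 1)) + 1 := by omega
        rw [this]
        push_cast
        ring
      rw [Finset.sum_congr rfl hc, Finset.sum_add_distrib]
      have h2 : ∑ i ∈ Finset.range N, D (i + 1) = 0 := by
        have := Finset.sum_range_succ' D N
        have h3 : ∑ i ∈ Finset.range (N + 1), D i = ∑ i ∈ Finset.range N, D i + D N :=
          Finset.sum_range_succ D N
        have h4 : ∑ i ∈ Finset.range (N + 1), D i = ∑ i ∈ Finset.range N, D (i + 1) + D 0 :=
          Finset.sum_range_succ' D N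
        have : ∑ i ∈ Finset.range N, D (i + 1) = ∑ i ∈ Finset.range N, D i + D N - D 0 := by
          rw [← h3, h4]; ring
        rw [this, hsum0, hDN]; ring
      rw [h2, add_zero]
      have h5 : ∑ i ∈ Finset.range N, ((N - (i + 1) : ℕ) : L) * D (i + 1)
          = ∑ i ∈ Finset.range N, ((N - i : ℕ) : L) * D i
            + ((N - N : ℕ) : L) * D N - ((N - 0 : ℕ) : L) * D 0 := by
        have h3 := Finset.sum_range_succ (fun j => ((N - j : ℕ) : L) * D j) N
        have h4 := Finset.sum_range_succ' (fun j => ((N - j : ℕ) : L) * D j) N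
        linear_combination h3 - h4
      rw [h5]
      simp only [Nat.sub_self, Nat.sub_zero, Nat.cast_zero, zero_mul]
      ring
    have hσsum : σ ((v : L) * ∑ i ∈ Finset.range N, ((N - i : ℕ) : L) * D i)
        = (v : L) * ∑ i ∈ Finset.range N, ((N - i : ℕ) : L) * D (i + 1) := by
      rw [map_mul, hσv, map_sum]
      congr 1
      refine Finset.sum_congr rfl fun i _ => ?_
      rw [map_mul, map_natCast, hσD]
    rw [hcoe, hσsum, ← mul_sub, hkey]
    have : D 0 = (y : L) := by simp [hD]
    rw [this, ← mul_assoc, hvL, one_mul]
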